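/- Let ε ≥ 0 and m, r ∈ ℕ with r ≤ m. Let M be a mechanism assigning to each s ∈ {−1,+1}^m a probability measure M(s) on Ω, satisfying (ε,0)-DP: for all s, s′ differing in exactly one coordinate and every measurable A, M(s)(A) ≤ e^ε·M(s′)(A). Let S be uniform on {−1,+1}^m, ω ~ M(S), and let Ŝ : Ω → {−1,0,+1}^m be a measurable guessing rule that almost surely makes exactly r nonzero guesses. Then the expected number of correct guesses satisfies E[Σ_{i=1}^m max{0, Ŝ(ω)_i · S_i}] ≤ r·e^ε/(e^ε+1). -/

import Mathlib

open MeasureTheory Real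
open scoped ENNReal

/-- The ±1 sign encoded by a Boolean membership bit (true = +1, false = −1). -/
def signOf (b : Bool) : ℤ := if b then 1 else -1

/-- expectation form of the O(1) auditing guarantee: for an (ε,0)-DP
mechanism M on membership vectors S ∈ {−1,+1}^m with i.i.d. fair-sign coordinates and a
measurable guessing rule with values in {−1,0,+1}^m making exactly r nonzero guesses
a.s., the expected number of correct guesses satisfies
E[Σᵢ max{0, Ŝᵢ·Sᵢ}] ≤ r·e^ε/(e^ε+1). -/
theorem o1_audit_expected_correct
    {Ω : Type*} [MeasurableSpace Ω]
    (ε : ℝ) (hε : 0 ≤ ε) (m r : ℕ) (hrm : r ≤ m)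
    (M : (Fin m → Bool) → Measure Ω)
    (hMprob : ∀ s, IsProbabilityMeasure (M s))
    (hDP : ∀ s s' : Fin m → Bool,
      (Finset.univ.filter (fun i => s i ≠ s' i)).card = 1 →
      ∀ A : Set Ω, MeasurableSet A →
        M s A ≤ ENNReal.ofReal (Real.exp ε) * M s' A)
    (P : Measure ((Fin m → Bool) × Ω))
    (hP : P = ∑ s : Fin m → Bool,
      ((2 : ℝ≥0∞) ^ m)⁻¹ • (M s).map (fun ω => (s, ω)))
    (Sg : Ω → Fin m → ℤ) (hSg : Measurable Sg)
    (hvals : ∀ ω i, Sg ω i = -1 ∨ Sg ω i = 0 ∨ Sg ω i = 1)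
    (hguesses : ∀ᵐ q ∂P, (Finset.univ.filter (fun i => Sg q.2 i ≠ 0)).card = r) :
    ∫ q, ((∑ i, max 0 (Sg q.2 i * signOf (q.1 i)) : ℤ) : ℝ) ∂P ≤
      (r : ℝ) * (Real.exp ε / (Real.exp ε + 1)) := by
  classical
  set k := Real.exp ε with hkdef
  have hkpos : 0 < k := Real.exp_pos ε
  -- the correct-guess sets and nonzero-guess sets
  set A : (Fin m → Bool) → Fin m → Set Ω := fun s i => (fun ω => Sg ω i) ⁻¹' {signOf (s i)} with hAdef
  set B : (Fin m → Bool) → Fin m → Set Ω := fun s i => (fun ω => Sg ω i) ⁻¹' {-signOf (s i)} with hBdef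
  set N : Fin m → Set Ω := fun i => (fun ω => Sg ω i) ⁻¹' {0}ᶜ with hNdef
  have hSgi : ∀ i, Measurable fun ω => Sg ω i := fun i => (measurable_pi_apply i).comp hSg
  have hAm : ∀ s i, MeasurableSet (A s i) := fun s i => (hSgi i) (measurableSet_singleton _)
  have hBm : ∀ s i, MeasurableSet (B s i) := fun s i => (hSgi i) (measurableSet_singleton _)
  have hNm : ∀ i, MeasurableSet (N i) := fun i => (hSgi i) (measurableSet_singleton _).compl
  have hfin : ∀ (s) (X : Set Ω), M s X ≠ ∞ := fun s X =>
    (measure_lt_top (M s) X).ne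
  -- pointwise: the i-th term is the indicator of A s i
  have hpt : ∀ (s : Fin m → Bool) ω i,
      ((max 0 (Sg ω i * signOf (s i)) : ℤ) : ℝ) = (A s i).indicator (fun _ => (1:ℝ)) ω := by
    intro s ω i
    rcases hvals ω i with h | h | h <;> cases hsi : s i <;>
      simp [hAdef, Set.indicator_apply, signOf, h, hsi, Set.mem_preimage]
  -- the integrand over each M s
  have hint : ∀ s : Fin m → Bool,
      ∫ ω, ((∑ i, max 0 (Sg ω i * signOf (s i)) : ℤ) : ℝ) ∂(M s)
        = ∑ i, (M s (A s i)).toReal := by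
    intro s
    have h1 : ∀ ω, ((∑ i, max 0 (Sg ω i * signOf (s i)) : ℤ) : ℝ)
        = ∑ i, (A s i).indicator (fun _ => (1:ℝ)) ω := by
      intro ω
      rw [Int.cast_sum]
      exact Finset.sum_congr rfl fun i _ => hpt s ω i
    rw [integral_congr_ae (Filter.Eventually.of_forall h1),
      integral_finset_sum _ (fun i _ => (integrable_const (1:ℝ)).indicator (hAm s i))]
    exact Finset.sum_congr rfl fun i _ => by
      rw [integral_indicator_const _ (hAm s i), smul_eq_mul, mul_one]; rfl
  -- P is a sum dominating each summand: extract the a.e. guess-count per s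
  have hguess_s : ∀ s : Fin m → Bool,
      ∀ᵐ ω ∂(M s), (Finset.univ.filter (fun i => Sg ω i ≠ 0)).card = r := by
    intro s
    have hac : (M s).map (fun ω => (s, ω)) ≪ P := by
      refine Measure.AbsolutelyContinuous.mk fun E hE hE0 => ?_
      rw [hP, Measure.coe_finset_sum, Finset.sum_apply] at hE0
      have h2 : (((2 : ℝ≥0∞) ^ m)⁻¹ • (M s).map (fun ω => (s, ω))) E = 0 :=
        (Finset.sum_eq_zero_iff.mp hE0) s (Finset.mem_univ s)
      rw [Measure.smul_apply, smul_eq_mul] at h2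
      have hc0 : ((2 : ℝ≥0∞) ^ m)⁻¹ ≠ 0 := by
        simp [ENNReal.pow_ne_top]
      exact (mul_eq_zero.mp h2).resolve_left hc0
    have hmap : ∀ᵐ q ∂((M s).map (fun ω => (s, ω))),
        (Finset.univ.filter (fun i => Sg q.2 i ≠ 0)).card = r :=
      hac.ae_le hguesses
    have hmeasι : Measurable (fun ω : Ω => (s, ω)) := measurable_prodMk_left
    have hsetm : MeasurableSet {q : (Fin m → Bool) × Ω |
        (Finset.univ.filter (fun i => Sg q.2 i ≠ 0)).card = r} := by
      have : Measurable fun q : (Fin m → Bool) × Ω =>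
          (Finset.univ.filter (fun i => Sg q.2 i ≠ 0)).card :=
        (measurable_of_countable
          (fun x : Fin m → ℤ => (Finset.univ.filter fun i => x i ≠ 0).card)).comp
          (hSg.comp measurable_snd)
      exact this (measurableSet_singleton r)
    have := (ae_map_iff hmeasι.aemeasurable hsetm).mp hmap
    exact this
  -- per s, the expected number of nonzero guesses is r
  have hNsum : ∀ s : Fin m → Bool, ∑ i, (M s (N i)).toReal = (r : ℝ) := by
    intro s
    have := hMprob s
    have h1 : ∫ ω, (∑ i, (N i).indicator (fun _ => (1:ℝ)) ω) ∂(M s)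
        = ∑ i, (M s (N i)).toReal := by
      rw [integral_finset_sum _ (fun i _ => (integrable_const (1:ℝ)).indicator (hNm i))]
      exact Finset.sum_congr rfl fun i _ => by
        rw [integral_indicator_const _ (hNm i), smul_eq_mul, mul_one]; rfl
    have h2 : ∀ᵐ ω ∂(M s),
        (∑ i, (N i).indicator (fun _ => (1:ℝ)) ω) = (r : ℝ) := by
      filter_upwards [hguess_s s] with ω hω
      rw [← hω, Finset.card_filter]
      push_cast
      refine Finset.sum_congr rfl fun i _ => ?_
      by_cases h : Sg ω i = 0 <;>
        simp [hNdef, Set.indicator_apply, Set.mem_preimage, h]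
    rw [← h1, integral_congr_ae h2, integral_const]
    simp
  -- flip equiv
  have hsignOf_not : ∀ b : Bool, signOf (!b) = -signOf b := by decide
  have hflip_inv : ∀ (i : Fin m) (s : Fin m → Bool),
      Function.update (Function.update s i (!s i)) i (!(Function.update s i (!s i)) i) = s := by
    intro i s
    rw [Function.update_self, Bool.not_not, Function.update_idem, Function.update_eq_self]
  have hflip_card : ∀ (i : Fin m) (s : Fin m → Bool),
      (Finset.univ.filter (fun j => s j ≠ Function.update s i (!s i) j)).card = 1 := by
    intro i s
    have : (Finset.univ.filter (fun j => s j ≠ Function.update s i (!s i) j)) = {i} := by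
      ext j
      simp only [Finset.mem_filter, Finset.mem_univ, true_and, Finset.mem_singleton,
        Function.update_apply]
      by_cases hj : j = i <;> simp [hj]
    rw [this, Finset.card_singleton]
  -- A s i = B (flip s) i
  have hAB : ∀ (i : Fin m) (s : Fin m → Bool),
      A s i = B (Function.update s i (!s i)) i := by
    intro i s
    simp [hAdef, hBdef, Function.update_self, hsignOf_not]
  -- key per-coordinate inequality
  have hkey : ∀ i : Fin m,
      ∑ s : Fin m → Bool, (M s (A s i)).toReal
        ≤ k / (k + 1) * ∑ s : Fin m → Bool, (M s (N i)).toReal := by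
    intro i
    set a : (Fin m → Bool) → ℝ := fun s => (M s (A s i)).toReal with hadef
    set b : (Fin m → Bool) → ℝ := fun s => (M s (B s i)).toReal with hbdef
    have hab : ∀ s, a s + b s = (M s (N i)).toReal := by
      intro s
      rw [hadef, hbdef]
      rw [← ENNReal.toReal_add (hfin s _) (hfin s _), ← measure_union ?hd (hBm s i)]
      · congr 1
        apply congrArg
        ext ω
        rcases hvals ω i with h | h | h <;> cases hsi : s i <;>
          simp [hAdef, hBdef, hNdef, Set.mem_preimage, signOf, h, hsi]
      · rw [Set.disjoint_left]
        intro ω hω hω'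
        simp only [hAdef, hBdef, Set.mem_preimage, Set.mem_singleton_iff] at hω hω'
        cases hsi : s i <;> rw [hsi] at hω hω' <;> simp [signOf] at hω hω' <;> omega
    have h2 : ∀ s : Fin m → Bool, a s ≤ k * b (Function.update s i (!s i)) := by
      intro s
      have hdp := hDP s (Function.update s i (!s i)) (hflip_card i s) (A s i) (hAm s i)
      have h1 : (M s (A s i)).toReal
          ≤ (ENNReal.ofReal k * M (Function.update s i (!s i)) (A s i)).toReal :=
        ENNReal.toReal_mono (ENNReal.mul_ne_top ENNReal.ofReal_ne_top (hfin _ _)) hdp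
      rw [ENNReal.toReal_mul, ENNReal.toReal_ofReal hkpos.le] at h1
      calc a s ≤ k * (M (Function.update s i (!s i)) (A s i)).toReal := h1
        _ = k * b (Function.update s i (!s i)) := by
            simp only [hbdef]; rw [← hAB i s]
    have hsumab : ∑ s : Fin m → Bool, a s ≤ k * ∑ s : Fin m → Bool, b s := by
      calc ∑ s : Fin m → Bool, a s
          ≤ ∑ s : Fin m → Bool, k * b (Function.update s i (!s i)) :=
            Finset.sum_le_sum fun s _ => h2 s
        _ = k * ∑ s : Fin m → Bool, b (Function.update s i (!s i)) := by rw [Finset.mul_sum]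
        _ = k * ∑ s : Fin m → Bool, b s := by
            congr 1
            exact Equiv.sum_comp
              (Function.Involutive.toPerm _ (fun s => hflip_inv i s)) b
    have hsum' : ∑ s : Fin m → Bool, (M s (N i)).toReal
        = (∑ s : Fin m → Bool, a s) + ∑ s : Fin m → Bool, b s := by
      rw [← Finset.sum_add_distrib]
      exact Finset.sum_congr rfl fun s _ => (hab s).symm
    have hX : (0:ℝ) ≤ ∑ s : Fin m → Bool, a s :=
      Finset.sum_nonneg fun s _ => ENNReal.toReal_nonneg
    have hY : (0:ℝ) ≤ ∑ s : Fin m → Bool, b s :=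
      Finset.sum_nonneg fun s _ => ENNReal.toReal_nonneg
    rw [hsum', div_mul_eq_mul_div, le_div_iff₀ (by positivity)]
    nlinarith [hsumab]
  -- decompose the integral over P
  set f : (Fin m → Bool) × Ω → ℝ :=
    fun q => ((∑ i, max 0 (Sg q.2 i * signOf (q.1 i)) : ℤ) : ℝ) with hfdef
  have hfmeas : Measurable f := by
    have heq : f = fun q => ∑ i, ({p : Bool × ℤ | p.2 = signOf p.1}.indicator
        (fun _ => (1:ℝ))) (q.1 i, Sg q.2 i) := by
      funext q
      rw [hfdef]
      beta_reduce
      rw [Int.cast_sum]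
      refine Finset.sum_congr rfl fun i _ => ?_
      rcases hvals q.2 i with h | h | h <;> cases hsi : q.1 i <;>
        simp [Set.indicator_apply, signOf, h, hsi]
    rw [heq]
    refine Finset.measurable_sum _ fun i _ => ?_
    have hm : Measurable fun q : (Fin m → Bool) × Ω => (q.1 i, Sg q.2 i) :=
      ((measurable_pi_apply i).comp measurable_fst).prodMk
        ((measurable_pi_apply i).comp (hSg.comp measurable_snd))
    exact (measurable_const.indicator ((Set.to_countable _).measurableSet)).comp hm
  have hfbound : ∀ q, ‖f q‖ ≤ (m : ℝ) := by
    intro q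
    rw [hfdef]
    simp only [Real.norm_eq_abs]
    have h1 : (0:ℤ) ≤ ∑ i, max 0 (Sg q.2 i * signOf (q.1 i)) :=
      Finset.sum_nonneg fun i _ => le_max_left _ _
    have h2 : (∑ i, max 0 (Sg q.2 i * signOf (q.1 i))) ≤ (m:ℤ) := by
      calc (∑ i, max 0 (Sg q.2 i * signOf (q.1 i))) ≤ ∑ _i : Fin m, (1:ℤ) :=
            Finset.sum_le_sum fun i _ => by
              rcases hvals q.2 i with h | h | h <;> cases hsi : q.1 i <;>
                simp [signOf, h, hsi]
        _ = m := by simp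
    rw [abs_of_nonneg (by exact_mod_cast h1)]
    exact_mod_cast h2
  have hintg : ∀ s : Fin m → Bool,
      Integrable f (((2 : ℝ≥0∞) ^ m)⁻¹ • (M s).map (fun ω => (s, ω))) := by
    intro s
    haveI := hMprob s
    haveI : IsFiniteMeasure (((2 : ℝ≥0∞) ^ m)⁻¹ • (M s).map (fun ω => (s, ω))) := by
      constructor
      rw [Measure.smul_apply, smul_eq_mul,
        Measure.map_apply measurable_prodMk_left MeasurableSet.univ]
      exact ENNReal.mul_lt_top (by simp; positivity) (measure_lt_top _ _)
    exact (integrable_const (m:ℝ)).mono' hfmeas.aestronglyMeasurable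
      (Filter.Eventually.of_forall hfbound)
  have hdecomp : ∫ q, f q ∂P
      = ∑ s : Fin m → Bool, ((2:ℝ)^m)⁻¹ * ∫ ω, f (s, ω) ∂(M s) := by
    rw [hP, integral_finset_sum_measure (fun s _ => hintg s)]
    refine Finset.sum_congr rfl fun s _ => ?_
    rw [integral_smul_measure,
      integral_map measurable_prodMk_left.aemeasurable hfmeas.aestronglyMeasurable]
    rw [smul_eq_mul]
    congr 1
    simp [ENNReal.toReal_inv, ENNReal.toReal_pow]
  have hcard : (Finset.univ : Finset (Fin m → Bool)).card = 2 ^ m := by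
    simp [Finset.card_univ]
  calc ∫ q, f q ∂P
      = ((2:ℝ)^m)⁻¹ * ∑ s : Fin m → Bool, ∑ i, (M s (A s i)).toReal := by
        rw [hdecomp, ← Finset.mul_sum]
        congr 1
        exact Finset.sum_congr rfl fun s _ => hint s
    _ = ((2:ℝ)^m)⁻¹ * ∑ i, ∑ s : Fin m → Bool, (M s (A s i)).toReal := by
        rw [Finset.sum_comm]
    _ ≤ ((2:ℝ)^m)⁻¹ * ∑ i, k / (k + 1) * ∑ s : Fin m → Bool, (M s (N i)).toReal := by
        refine mul_le_mul_of_nonneg_left (Finset.sum_le_sum fun i _ => hkey i) (by positivity)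
    _ = ((2:ℝ)^m)⁻¹ * (k / (k + 1) * ∑ s : Fin m → Bool, ∑ i, (M s (N i)).toReal) := by
        rw [← Finset.mul_sum, Finset.sum_comm]
    _ = ((2:ℝ)^m)⁻¹ * (k / (k + 1) * (2^m * (r:ℝ))) := by
        rw [Finset.sum_congr rfl fun s _ => hNsum s, Finset.sum_const, hcard]
        push_cast
        ring_nf
    _ = (r:ℝ) * (k / (k + 1)) := by
        field_simp
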